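/- Let x ≥ 0 and y be integers, and let G_0 be a graph of minimum order in the nonempty family M(x,y). Then the independence number of G_0 is less than 3. -/

import Mathlib

/-- The independence number of `G`: the clique number of the complement. -/
noncomputable def indepNum {V : Type*} (G : SimpleGraph V) : ℕ := Gᶜ.cliqueNum

/-- The chromatic number of `G` as a natural number. -/
noncomputable def chi {V : Type*} (G : SimpleGraph V) : ℕ := G.chromaticNumber.toNat

/-- `f(G) = χ(G) − cl(G)`. -/
noncomputable def fDiff {V : Type*} (G : SimpleGraph V) : ℕ := chi G - G.cliqueNum

/-- Membership in the family `M(x,y) = {G : |V(G)| < χ(G) + 2f(G) − x and f(G) ≤ y}`. -/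
def inM (x y : ℤ) {V : Type*} [Fintype V] (G : SimpleGraph V) : Prop :=
  (Fintype.card V : ℤ) < chi G + 2 * fDiff G - x ∧ (fDiff G : ℤ) ≤ y

/-- The set of orders of members of `M(x,y)`. -/
def McardSet (x y : ℤ) : Set ℕ := {n | ∃ G : SimpleGraph (Fin n), inM x y G}

open SimpleGraph

section Aux

variable {V : Type*} {W : Type*}

lemma chi_colorable [Fintype V] (G : SimpleGraph V) : G.Colorable (chi G) :=
  G.colorable_chromaticNumber_of_fintype

lemma chi_le_of_colorable [Fintype V] {G : SimpleGraph V} {n : ℕ}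
    (h : G.Colorable n) : chi G ≤ n :=
  ENat.toNat_le_of_le_coe h.chromaticNumber_le

lemma chi_mono_emb [Fintype V] [Fintype W] {G : SimpleGraph V} {H : SimpleGraph W}
    (f : G ↪g H) : chi G ≤ chi H :=
  chi_le_of_colorable (Colorable.of_hom f.toHom (chi_colorable H))

lemma cliqueNum_le_chi [Fintype V] (G : SimpleGraph V) : G.cliqueNum ≤ chi G := by
  obtain ⟨s, hs⟩ := G.exists_isNClique_cliqueNum
  have h := hs.isClique.card_le_chromaticNumber
  rw [hs.card_eq] at h
  have := ENat.toNat_le_toNat h (by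
    exact (chromaticNumber_ne_top_iff_exists).mpr ⟨chi G, chi_colorable G⟩)
  simpa [chi] using this

lemma cliqueNum_mono_emb [Fintype V] [Fintype W] {G : SimpleGraph V} {H : SimpleGraph W}
    (f : G ↪g H) : G.cliqueNum ≤ H.cliqueNum := by
  classical
  obtain ⟨s, hs⟩ := G.exists_isNClique_cliqueNum
  have hclique : H.IsClique (↑(s.map f.toEmbedding) : Set W) := by
    intro a ha b hb hne
    simp only [Finset.coe_map, Set.mem_image, Finset.mem_coe] at ha hb
    obtain ⟨u, hu, rfl⟩ := ha
    obtain ⟨v, hv, rfl⟩ := hb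
    have huv : u ≠ v := fun h => hne (by rw [h])
    exact f.map_adj_iff.mpr (hs.isClique hu hv huv)
  have := hclique.card_le_cliqueNum
  rwa [Finset.card_map, hs.card_eq] at this

/-- A clique of `G` contained in `S` gives a lower bound on the clique number of the
induced subgraph on `S`. -/
lemma le_cliqueNum_induce [Fintype V] (G : SimpleGraph V) (S : Set V) [Fintype ↥S]
    (K : Finset V) (hK : G.IsClique ↑K) (hKS : ↑K ⊆ S) :
    K.card ≤ (G.induce S).cliqueNum := by
  classical
  let t : Finset ↥S := K.attach.map
    ⟨fun z => (⟨z.1, hKS z.2⟩ : ↥S), by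
      intro a b hab
      simp only [Subtype.mk.injEq] at hab
      exact Subtype.ext hab⟩
  have hmem : ∀ z ∈ t, (z : V) ∈ K := by
    intro z hz
    simp only [t, Finset.mem_map, Finset.mem_attach, true_and, Function.Embedding.coeFn_mk]
      at hz
    obtain ⟨u, _, rfl⟩ := hz
    exact u.2
  have ht : (G.induce S).IsClique ↑t := by
    intro a ha b hb hne
    have hadj : G.Adj a b := hK (hmem a ha) (hmem b hb) (fun h => hne (Subtype.ext h))
    exact hadj
  have := ht.card_le_cliqueNum
  rwa [Finset.card_map, Finset.card_attach] at this

/-- Inclusion embedding between induced subgraphs. -/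
def inclEmb (G : SimpleGraph V) {S T : Set V} (h : S ⊆ T) :
    G.induce S ↪g G.induce T :=
  ⟨⟨Set.inclusion h, Set.inclusion_injective h⟩, by
    intro a b
    simp [Set.inclusion]⟩

/-- If the complement of `S` is an independent set, then `χ(G) ≤ χ(G[S]) + 1`. -/
lemma chi_le_induce_add_one [Fintype V] (G : SimpleGraph V) (S : Set V) [Fintype ↥S]
    (hind : ∀ a ∈ Sᶜ, ∀ b ∈ Sᶜ, a ≠ b → ¬ G.Adj a b) :
    chi G ≤ chi (G.induce S) + 1 := by
  classical
  set k := chi (G.induce S) with hk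
  obtain ⟨C⟩ := chi_colorable (G.induce S)
  apply chi_le_of_colorable
  refine ⟨Coloring.mk (fun v => if h : v ∈ S then (C ⟨v, h⟩).castSucc else Fin.last k) ?_⟩
  intro v w hadj
  by_cases hv : v ∈ S <;> by_cases hw : w ∈ S
  · simp only [hv, hw, dif_pos]
    intro h
    have hC : C ⟨v, hv⟩ ≠ C ⟨w, hw⟩ := C.valid hadj
    exact hC (Fin.castSucc_injective _ h)
  · simp only [hv, hw, dif_pos, dif_neg, not_false_iff]
    exact (Fin.castSucc_lt_last _).ne
  · simp only [hv, hw, dif_pos, dif_neg, not_false_iff]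
    exact (Fin.castSucc_lt_last _).ne'
  · exact absurd hadj (hind v hv w hw hadj.ne)

lemma mem_McardSet {x y : ℤ} [Fintype W] (H : SimpleGraph W) (h : inM x y H) :
    Fintype.card W ∈ McardSet x y := by
  classical
  set n := Fintype.card W with hn
  let H' := H.overFin (n := n) rfl
  have iso : H ≃g H' := H.overFinIso rfl
  have hchi : chi H' = chi H :=
    le_antisymm (chi_mono_emb iso.symm.toEmbedding) (chi_mono_emb iso.toEmbedding)
  have hcl : H'.cliqueNum = H.cliqueNum :=
    le_antisymm (cliqueNum_mono_emb iso.symm.toEmbedding)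
      (cliqueNum_mono_emb iso.toEmbedding)
  refine ⟨H', ?_⟩
  unfold inM fDiff at h ⊢
  rw [hchi, hcl, Fintype.card_fin]
  exact h

end Aux

theorem stmt14 {V : Type*} [Fintype V] (x y : ℤ) (hx : 0 ≤ x)
    (G₀ : SimpleGraph V) (hG₀ : inM x y G₀)
    (hmin : ∀ n ∈ McardSet x y, Fintype.card V ≤ n) :
    _root_.indepNum G₀ < 3 := by
  classical
  by_contra hcon
  push_neg at hcon
  -- extract an independent set of size 3
  obtain ⟨s, hs⟩ := G₀ᶜ.exists_isNClique_cliqueNum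
  have hscard : 3 ≤ s.card := by rw [hs.card_eq]; exact hcon
  obtain ⟨I, hIs, hIcard⟩ := Finset.exists_subset_card_eq hscard
  have hIind : ∀ a ∈ I, ∀ b ∈ I, a ≠ b → ¬ G₀.Adj a b := by
    intro a ha b hb hne
    have := hs.isClique (hIs ha) (hIs hb) hne
    exact this.2
  -- notation
  set n := Fintype.card V with hn
  set c := chi G₀ with hc
  set w := G₀.cliqueNum with hw
  have hwc : w ≤ c := cliqueNum_le_chi G₀
  have hIn : 3 ≤ n := by
    calc 3 = I.card := hIcard.symm
    _ ≤ Fintype.card V := I.card_le_univ.trans_eq (by simp)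
  -- the induced subgraph on the complement of I
  set S : Set V := (↑I : Set V)ᶜ with hS
  set G' := G₀.induce S with hG'
  set c' := chi G' with hc'
  set w' := G'.cliqueNum with hw'
  have hwc' : w' ≤ c' := cliqueNum_le_chi G'
  have hcardS : Fintype.card ↥S = n - 3 := by
    show Fintype.card ↥((↑I : Set V)ᶜ) = n - 3
    rw [Fintype.card_compl_set]
    have h3 : Fintype.card ↥(↑I : Set V) = 3 := by rw [← hIcard]; simp
    omega
  -- χ' ≤ χ
  have hc'le : c' ≤ c := chi_mono_emb (SimpleGraph.Embedding.induce S)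
  -- χ ≤ χ' + 1
  have hcle : c ≤ c' + 1 := by
    apply chi_le_induce_add_one
    intro a ha b hb hne
    rw [hS, compl_compl] at ha hb
    exact hIind a ha b hb hne
  -- ω' ≤ ω
  have hw'le : w' ≤ w := cliqueNum_mono_emb (SimpleGraph.Embedding.induce S)
  -- a maximum clique K
  obtain ⟨K, hK⟩ := G₀.exists_isNClique_cliqueNum
  have hKI : (K ∩ I).card ≤ 1 := by
    rw [Finset.card_le_one]
    intro a ha b hb
    by_contra hne
    exact hIind a (Finset.mem_inter.mp ha).2 b (Finset.mem_inter.mp hb).2 hne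
      (hK.isClique (Finset.mem_inter.mp ha).1 (Finset.mem_inter.mp hb).1 hne)
  -- ω ≤ ω' + 1
  have hwle : w ≤ w' + 1 := by
    have hsub : ((K \ I : Finset V) : Set V) ⊆ S := by
      intro z hz
      simp only [Finset.coe_sdiff, Set.mem_diff, Finset.mem_coe] at hz
      simp only [hS, Set.mem_compl_iff, Finset.mem_coe]
      exact hz.2
    have h1 : (K \ I).card ≤ w' :=
      le_cliqueNum_induce G₀ S (K \ I)
        (hK.isClique.subset (by simp only [Finset.coe_sdiff]; exact Set.diff_subset)) hsub
    have h2 : K.card ≤ (K \ I).card + 1 := by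
      have := Finset.card_inter_add_card_sdiff K I
      omega
    rw [hK.card_eq] at h2
    omega
  -- unpack hG₀
  obtain ⟨hG1, hG2⟩ := hG₀
  have hfd : (fDiff G₀ : ℤ) = (c : ℤ) - w := by
    unfold fDiff
    rw [← hc, ← hw]
    push_cast [Nat.cast_sub hwc]
    ring
  rw [hfd] at hG1 hG2
  rw [← hn, ← hc] at hG1
  by_cases hfy : ((c' : ℤ) - w' ≤ y)
  · -- G' is in M(x,y), contradicting minimality
    have hmem : Fintype.card ↥S ∈ McardSet x y := by
      apply mem_McardSet
      constructor
      · rw [hcardS]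
        have hfd' : (fDiff G' : ℤ) = (c' : ℤ) - w' := by
          unfold fDiff
          rw [← hc', ← hw']
          push_cast [Nat.cast_sub hwc']
          ring
        rw [hfd', ← hc']
        push_cast
        omega
      · have hfd' : (fDiff G' : ℤ) = (c' : ℤ) - w' := by
          unfold fDiff
          rw [← hc', ← hw']
          push_cast [Nat.cast_sub hwc']
          ring
        rw [hfd']
        exact hfy
    have := hmin _ hmem
    rw [hcardS] at this
    omega
  · -- then c' = c; remove a single vertex a ∈ I \ K
    push_neg at hfy
    have hceq : c' = c := by omega
    have hIK : ∃ a ∈ I, a ∉ K := by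
      by_contra hno
      push_neg at hno
      have : I ⊆ K ∩ I := fun z hz => Finset.mem_inter.mpr ⟨hno z hz, hz⟩
      have := Finset.card_le_card this
      omega
    obtain ⟨a, haI, haK⟩ := hIK
    set T : Set V := ({a} : Set V)ᶜ with hT
    set G'' := G₀.induce T with hG''
    have hST : S ⊆ T := by
      intro z hz
      simp only [hS, Set.mem_compl_iff, Finset.mem_coe] at hz
      simp only [hT, Set.mem_compl_iff, Set.mem_singleton_iff]
      intro h
      exact hz (h ▸ haI)
    have hcardT : Fintype.card ↥T = n - 1 := by
      show Fintype.card ↥(({a} : Set V)ᶜ) = n - 1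
      rw [Fintype.card_compl_set]
      have h1 : Fintype.card ↥({a} : Set V) = 1 := by simp
      omega
    -- χ'' = c
    have hc''le : chi G'' ≤ c := chi_mono_emb (SimpleGraph.Embedding.induce T)
    have hc''ge : c' ≤ chi G'' := chi_mono_emb (inclEmb G₀ hST)
    have hc'' : chi G'' = c := by omega
    -- ω'' = w
    have hw''le : G''.cliqueNum ≤ w := cliqueNum_mono_emb (SimpleGraph.Embedding.induce T)
    have hw''ge : w ≤ G''.cliqueNum := by
      have hsub : (↑K : Set V) ⊆ T := by
        intro z hz
        simp only [hT, Set.mem_compl_iff, Set.mem_singleton_iff]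
        intro h
        exact haK (h ▸ hz)
      have := le_cliqueNum_induce G₀ T K hK.isClique hsub
      rwa [hK.card_eq] at this
    have hw'' : G''.cliqueNum = w := le_antisymm hw''le hw''ge
    have hfd'' : (fDiff G'' : ℤ) = (c : ℤ) - w := by
      unfold fDiff
      rw [hc'', hw'']
      push_cast [Nat.cast_sub hwc]
      ring
    have hmem : Fintype.card ↥T ∈ McardSet x y := by
      apply mem_McardSet
      constructor
      · rw [hcardT, hfd'', hc'']
        omega
      · rw [hfd'']
        omega
    have := hmin _ hmem
    rw [hcardT] at this
    omega
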